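/- arXiv:1909.07964 — 2 statements merged into one kernel-verified Lean document; each statement's English description precedes it below -/
import Mathlib

section
/- If L(H) contains K_t as a minor, then for any m ≥ 2, L(mH) contains K_{mt} as a minor. -/
/-- A multigraph: a type of vertices, a type of edges, an endpoints map,
and no loops. Parallel edges are allowed. -/
structure MG : Type 1 where
  V : Type
  E : Type
  ends : E → Sym2 V
  noLoop : ∀ e, ¬ (ends e).IsDiag

namespace MG

/-- Two vertices are adjacent if some edge joins them. -/
def Adjv (G : MG) (x y : G.V) : Prop := ∃ e, G.ends e = s(x, y)

/-- Isomorphism of multigraphs. -/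
def Iso (G H : MG) : Prop :=
  ∃ (fv : G.V ≃ H.V) (fe : G.E ≃ H.E), ∀ e, H.ends (fe e) = Sym2.map fv (G.ends e)

/-- `H` is (isomorphic to) a subgraph of `G`. -/
def IsSubgraphOf (H G : MG) : Prop :=
  ∃ (fv : H.V ↪ G.V) (fe : H.E ↪ G.E), ∀ e, G.ends (fe e) = Sym2.map fv (H.ends e)

/-- The multigraph obtained from `G` by deleting the edges `e₁, e₂` and adding a
new edge with endpoints `u, w`. -/
def splitOff (G : MG) (e₁ e₂ : G.E) (u w : G.V) (huw : u ≠ w) : MG where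
  V := G.V
  E := {e : G.E // e ≠ e₁ ∧ e ≠ e₂} ⊕ Unit
  ends := fun x => match x with
    | Sum.inl e => G.ends e.1
    | Sum.inr _ => s(u, w)
  noLoop := by
    rintro (e | e)
    · exact G.noLoop e.1
    · simpa [Sym2.mk_isDiag_iff] using huw

/-- `G'` is obtained from `G` by splitting off one pair of adjacent edges. -/
def SplitStep (G G' : MG) : Prop :=
  ∃ (e₁ e₂ : G.E) (u v w : G.V) (huw : u ≠ w),
    e₁ ≠ e₂ ∧ G.ends e₁ = s(u, v) ∧ G.ends e₂ = s(v, w) ∧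
      Iso G' (G.splitOff e₁ e₂ u w huw)

/-- `G` has an `H`-immersion: `H` can be obtained from a subgraph of `G` by
splitting off pairs of adjacent edges and removing isolated vertices. -/
def Immersion (G H : MG) : Prop :=
  ∃ G₀ G₁ : MG, G₀.IsSubgraphOf G ∧ Relation.ReflTransGen SplitStep G₀ G₁ ∧
    ∃ (fv : H.V ↪ G₁.V) (fe : H.E ≃ G₁.E),
      (∀ e, G₁.ends (fe e) = Sym2.map fv (H.ends e)) ∧
      ∀ v : G₁.V, v ∉ Set.range fv → ∀ e, v ∉ G₁.ends e

/-- A set of vertices induces a connected subgraph. -/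
def ConnIn (G : MG) (S : Set G.V) : Prop :=
  ∀ a ∈ S, ∀ b ∈ S, Relation.ReflTransGen (fun x y => x ∈ S ∧ y ∈ S ∧ G.Adjv x y) a b

/-- `G` has an `H`-minor (branch set formulation of contracting edges in a
subgraph of `G`). -/
def Minor (G H : MG) : Prop :=
  ∃ β : H.V → Set G.V,
    (∀ u, (β u).Nonempty) ∧ (∀ u, G.ConnIn (β u)) ∧
    (Pairwise fun u v => Disjoint (β u) (β v)) ∧
    ∃ η : H.E ↪ G.E, ∀ e u v, H.ends e = s(u, v) →
      ∃ a ∈ β u, ∃ b ∈ β v, G.ends (η e) = s(a, b)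

/-- `G` is a connected multigraph. -/
def Connected (G : MG) : Prop :=
  Nonempty G.V ∧ ∀ a b : G.V, Relation.ReflTransGen G.Adjv a b

/-- The degree of `v` is at least `k`. -/
def degGE (G : MG) (v : G.V) (k : ℕ) : Prop :=
  Nonempty (Fin k ↪ {e : G.E // v ∈ G.ends e})

/-- The line graph of a multigraph: a vertex for each edge, two vertices
adjacent iff the corresponding edges share an endpoint. -/
def lineGraph (G : MG) : SimpleGraph G.E where
  Adj e f := e ≠ f ∧ ∃ v, v ∈ G.ends e ∧ v ∈ G.ends f
  symm := ⟨by rintro e f ⟨h, v, h1, h2⟩; exact ⟨Ne.symm h, v, h2, h1⟩⟩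
  loopless := ⟨by rintro e ⟨h, _⟩; exact h rfl⟩

/-- `mG`: each edge of `G` is replaced by `m` parallel copies. -/
def mul (G : MG) (m : ℕ) : MG where
  V := G.V
  E := G.E × Fin m
  ends := fun p => G.ends p.1
  noLoop := fun p => G.noLoop p.1

/-- `G` has a proper edge colouring with `n` colours. -/
def EdgeColorable (G : MG) (n : ℕ) : Prop :=
  ∃ C : G.E → Fin n, ∀ e f, e ≠ f → (∃ v, v ∈ G.ends e ∧ v ∈ G.ends f) → C e ≠ C f

/-- The chromatic index of `G`. -/
noncomputable def chromIndex (G : MG) : ℕ := sInf {n | G.EdgeColorable n}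

/-- A path between edges: a nonempty sequence of distinct edges in which
consecutive edges are adjacent (this corresponds exactly to a path in the
line graph). -/
structure EPath (G : MG) where
  edges : List G.E
  ne : edges ≠ []
  nodup : edges.Nodup
  chain : edges.Chain' fun a b => ∃ v, v ∈ G.ends a ∧ v ∈ G.ends b

/-- First edge of an edge-path. -/
def EPath.firstE {G : MG} (P : EPath G) : G.E := P.edges.head P.ne

/-- Last edge of an edge-path. -/
def EPath.lastE {G : MG} (P : EPath G) : G.E := P.edges.getLast P.ne

/-- The (unordered) pair of edges `p` occurs consecutively in `P`; that is,
the corresponding 2-edge path is a subpath of `P`. -/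
def EPath.Adj2 {G : MG} (P : EPath G) (p : Sym2 G.E) : Prop :=
  ∃ l₁ a b l₂, P.edges = l₁ ++ a :: b :: l₂ ∧ p = s(a, b)

/-- A set of paths is semi-edge-disjoint: every 2-edge path is a subpath of at
most one path of the set. -/
def SED (G : MG) (S : Set (EPath G)) : Prop :=
  ∀ P ∈ S, ∀ Q ∈ S, ∀ p, P.Adj2 p → Q.Adj2 p → P = Q

/-- `H` contains `t` distinct edges and a path between each pair of them such
that this set of paths is semi-edge-disjoint. -/
def CliqueSED (H : MG) (t : ℕ) : Prop :=
  ∃ (f : Fin t ↪ H.E) (P : (i j : Fin t) → i < j → EPath H),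
    (∀ i j h, (P i j h).firstE = f i ∧ (P i j h).lastE = f j) ∧
    H.SED {Q | ∃ i j h, Q = P i j h}

/-- A path in a multigraph, recorded by its vertex sequence (without
repetitions) and edge sequence. -/
structure VPath (G : MG) where
  verts : List G.V
  edges : List G.E
  hlen : verts.length = edges.length + 1
  nodup : verts.Nodup
  hends : ∀ (i : ℕ) (h : i < edges.length),
    G.ends (edges.get ⟨i, h⟩) =
      s(verts.get ⟨i, by omega⟩, verts.get ⟨i + 1, by omega⟩)

/-- First vertex of a path. -/
def VPath.first {G : MG} (P : VPath G) : G.V :=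
  P.verts.head (by have h := P.hlen; intro hnil; rw [hnil] at h; simp at h)

/-- Last vertex of a path. -/
def VPath.last {G : MG} (P : VPath G) : G.V :=
  P.verts.getLast (by have h := P.hlen; intro hnil; rw [hnil] at h; simp at h)

/-- A cycle in a multigraph: distinct vertices `v 0, …, v (n-1)` and distinct
edges `e 0, …, e (n-1)` with `e i` joining `v i` to `v (i+1 mod n)`. -/
structure Cycle (G : MG) where
  n : ℕ
  hn : 2 ≤ n
  v : Fin n → G.V
  e : Fin n → G.E
  vinj : Function.Injective v
  einj : Function.Injective e
  hends : ∀ i : Fin n,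
    G.ends (e i) =
      s(v i, v ⟨(i.1 + 1) % n, Nat.mod_lt _ (Nat.lt_of_le_of_lt (Nat.zero_le _) i.isLt)⟩)

/-- `G` has a topological `H`-minor: branch vertices joined by internally
disjoint paths. -/
def TopMinor (G H : MG) : Prop :=
  ∃ (fv : H.V ↪ G.V) (P : H.E → VPath G),
    (∀ e, s((P e).first, (P e).last) = Sym2.map fv (H.ends e)) ∧
    (∀ e, ∀ x ∈ (P e).verts.tail.dropLast, x ∉ Set.range fv) ∧
    (∀ e f, e ≠ f → ∀ x, x ∈ (P e).verts → x ∈ (P f).verts → x ∈ Set.range fv) ∧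
    (∀ e f, e ≠ f → ∀ x ∈ (P e).edges, x ∉ (P f).edges)

/-- A set of edges spans a connected subgraph. -/
def ConnEdges (G : MG) (S : Set G.E) : Prop :=
  ∀ e ∈ S, ∀ f ∈ S,
    Relation.ReflTransGen (fun a b => a ∈ S ∧ b ∈ S ∧ ∃ v, v ∈ G.ends a ∧ v ∈ G.ends b) e f

end MG

/-- A simple graph regarded as a multigraph. -/
def SimpleGraph.toMG {V : Type} (G : SimpleGraph V) : MG where
  V := V
  E := G.edgeSet
  ends := fun e => e.1
  noLoop := fun e => G.not_isDiag_of_mem_edgeSet e.2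

/-- The complete graph `K_t` as a multigraph. -/
def completeMG (t : ℕ) : MG := (⊤ : SimpleGraph (Fin t)).toMG


/-- Auxiliary: the symmetric pair of edges of `mH` used to realize the edge
between branch sets indexed by `x` and `y`. -/
private def gfun (H : MG) (m t : ℕ) (P : Fin (m * t) → Fin t × Fin m)
    (c : Fin t → H.E) (A B : Fin t → Fin t → H.E)
    (x y : Fin (m * t)) : Sym2 (H.E × Fin m) :=
  if (P x).1 = (P y).1 then
    s((c (P x).1, (P x).2), (c (P x).1, (P y).2))
  else if (P x).1 < (P y).1 then
    s((A (P x).1 (P y).1, (P x).2), (B (P x).1 (P y).1, (P y).2))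
  else
    s((B (P y).1 (P x).1, (P x).2), (A (P y).1 (P x).1, (P y).2))

private lemma gfun_symm (H : MG) (m t : ℕ) (P : Fin (m * t) → Fin t × Fin m)
    (c : Fin t → H.E) (A B : Fin t → Fin t → H.E) (x y : Fin (m * t)) :
    gfun H m t P c A B x y = gfun H m t P c A B y x := by
  unfold gfun
  rcases eq_or_ne (P x).1 (P y).1 with h | h
  · rw [if_pos h, if_pos h.symm, h, Sym2.eq_swap]
  · rcases lt_or_gt_of_ne h with h2 | h2
    · rw [if_neg h, if_pos h2, if_neg (Ne.symm h), if_neg (not_lt.mpr h2.le),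
        Sym2.eq_swap]
    · rw [if_neg h, if_neg (not_lt.mpr h2.le), if_neg (Ne.symm h), if_pos h2,
        Sym2.eq_swap]

private lemma gfun_spec (H : MG) (m t : ℕ) (P : Fin (m * t) → Fin t × Fin m)
    (c : Fin t → H.E) (A B : Fin t → Fin t → H.E)
    (β : Fin t → Set H.E)
    (hc : ∀ u, c u ∈ β u)
    (hAB : ∀ u v, u ≠ v → A u v ∈ β u ∧ B u v ∈ β v ∧ A u v ≠ B u v ∧
      ∃ w, w ∈ H.ends (A u v) ∧ w ∈ H.ends (B u v))
    (hPinj : Function.Injective P)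
    (x y : Fin (m * t)) (hxy : x ≠ y) :
    ∃ a b, gfun H m t P c A B x y = s((a, (P x).2), (b, (P y).2)) ∧
      a ∈ β (P x).1 ∧ b ∈ β (P y).1 ∧
      (a, (P x).2) ≠ (b, (P y).2) ∧
      ∃ w, w ∈ H.ends a ∧ w ∈ H.ends b := by
  unfold gfun
  rcases eq_or_ne (P x).1 (P y).1 with h | h
  · have hsnd : (P x).2 ≠ (P y).2 := by
      intro h2
      exact hxy (hPinj (Prod.ext h h2))
    refine ⟨c (P x).1, c (P x).1, by rw [if_pos h], hc _, h ▸ hc _, ?_, ?_⟩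
    · intro h3
      exact hsnd (Prod.mk.injEq _ _ _ _ ▸ h3).2
    · exact ⟨(H.ends (c (P x).1)).out.1, Sym2.out_fst_mem _, Sym2.out_fst_mem _⟩
  · rcases lt_or_gt_of_ne h with h2 | h2
    · obtain ⟨hA, hB, hne, hw⟩ := hAB _ _ h
      refine ⟨A (P x).1 (P y).1, B (P x).1 (P y).1,
        by rw [if_neg h, if_pos h2], hA, hB, ?_, hw⟩
      intro h3
      exact hne (Prod.mk.injEq _ _ _ _ ▸ h3).1
    · obtain ⟨hA, hB, hne, hw⟩ := hAB _ _ (Ne.symm h)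
      refine ⟨B (P y).1 (P x).1, A (P y).1 (P x).1,
        by rw [if_neg h, if_neg (not_lt.mpr h2.le)], hB, hA, ?_, ?_⟩
      · intro h3
        exact hne ((Prod.mk.injEq _ _ _ _ ▸ h3).1).symm
      · obtain ⟨w, hw1, hw2⟩ := hw
        exact ⟨w, hw2, hw1⟩

/-- if `L(H)` contains `K_t` as a minor, then `L(mH)` contains
`K_{mt}` as a minor, for any `m ≥ 2`. -/
theorem lineGraph_mul_clique_minor (H : MG) (t : ℕ)
    (h : MG.Minor (SimpleGraph.toMG H.lineGraph) (completeMG t))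
    (m : ℕ) (hm : 2 ≤ m) :
    MG.Minor (SimpleGraph.toMG (H.mul m).lineGraph) (completeMG (m * t)) := by
  classical
  obtain ⟨β, hne, hconn, hdisj, η, hη⟩ := h
  have key : ∀ u v : Fin t, ∃ a b, u ≠ v → a ∈ β u ∧ b ∈ β v ∧ a ≠ b ∧
      ∃ w, w ∈ H.ends a ∧ w ∈ H.ends b := by
    intro u v
    by_cases huv : u = v
    · exact ⟨(hne u).choose, (hne u).choose, fun h => absurd huv h⟩
    · have he : s(u, v) ∈ (⊤ : SimpleGraph (Fin t)).edgeSet := by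
        rw [SimpleGraph.mem_edgeSet]; exact huv
      obtain ⟨a, ha, b, hb, hab⟩ := hη ⟨s(u, v), he⟩ u v rfl
      have hadj : H.lineGraph.Adj a b := by
        have h2 := (η ⟨s(u, v), he⟩).2
        have h3 : (η ⟨s(u, v), he⟩).1 = s(a, b) := hab
        rw [h3] at h2
        exact h2
      obtain ⟨hne2, w, hw1, hw2⟩ := hadj
      exact ⟨a, b, fun _ => ⟨ha, hb, hne2, w, hw1, hw2⟩⟩
  choose A B hAB using key
  choose c hc using hne
  set P : Fin (m * t) → Fin t × Fin m :=
    fun x => finProdFinEquiv.symm (finCongr (Nat.mul_comm m t) x) with hPdef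
  have hPinj : Function.Injective P :=
    fun a b hab => (finCongr (Nat.mul_comm m t)).injective
      (finProdFinEquiv.symm.injective hab)
  have gsymm : ∀ x y, gfun H m t P c A B x y = gfun H m t P c A B y x :=
    gfun_symm H m t P c A B
  have gspec := gfun_spec H m t P c A B β hc hAB hPinj
  have memlem : ∀ z : Sym2 (Fin (m * t)),
      z ∈ (⊤ : SimpleGraph (Fin (m * t))).edgeSet →
      Sym2.lift ⟨gfun H m t P c A B, gsymm⟩ z ∈ (H.mul m).lineGraph.edgeSet := by
    intro z
    induction z using Sym2.ind with
    | _ x y =>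
      intro hz
      have hxy : x ≠ y := by rwa [SimpleGraph.mem_edgeSet] at hz
      obtain ⟨a, b, hg, _, _, hneq, w, hw1, hw2⟩ := gspec x y hxy
      rw [Sym2.lift_mk]
      have hmem : gfun H m t P c A B x y ∈ (H.mul m).lineGraph.edgeSet := by
        rw [hg]
        exact (SimpleGraph.mem_edgeSet (G := (H.mul m).lineGraph)).2 ⟨hneq, w, hw1, hw2⟩
      exact hmem
  have injlem : ∀ z z' : Sym2 (Fin (m * t)),
      z ∈ (⊤ : SimpleGraph (Fin (m * t))).edgeSet →
      z' ∈ (⊤ : SimpleGraph (Fin (m * t))).edgeSet →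
      Sym2.lift ⟨gfun H m t P c A B, gsymm⟩ z =
        Sym2.lift ⟨gfun H m t P c A B, gsymm⟩ z' → z = z' := by
    intro z z'
    induction z using Sym2.ind with
    | _ x y =>
      induction z' using Sym2.ind with
      | _ x' y' =>
        intro hz hz' hl
        have hxy : x ≠ y := by rwa [SimpleGraph.mem_edgeSet] at hz
        have hxy' : x' ≠ y' := by rwa [SimpleGraph.mem_edgeSet] at hz'
        obtain ⟨a, b, hg, ha, hb, _, _⟩ := gspec x y hxy
        obtain ⟨a', b', hg', ha', hb', _, _⟩ := gspec x' y' hxy'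
        rw [Sym2.lift_mk, Sym2.lift_mk] at hl
        have hl' : gfun H m t P c A B x y = gfun H m t P c A B x' y' := hl
        rw [hg, hg', Sym2.eq_iff] at hl'
        have hrec : ∀ (u u' : Fin t) (p : H.E), p ∈ β u → p ∈ β u' → u = u' := by
          intro u u' p hu hu'
          by_contra hne3
          exact Set.disjoint_left.1 (hdisj hne3) hu hu'
        rcases hl' with ⟨h1, h2⟩ | ⟨h1, h2⟩
        · obtain ⟨h1a, h1b⟩ := Prod.mk.injEq .. ▸ h1
          obtain ⟨h2a, h2b⟩ := Prod.mk.injEq .. ▸ h2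
          have e1 : x = x' := hPinj (Prod.ext
            (hrec _ _ a ha (by rw [h1a]; exact ha')) h1b)
          have e2 : y = y' := hPinj (Prod.ext
            (hrec _ _ b hb (by rw [h2a]; exact hb')) h2b)
          rw [e1, e2]
        · obtain ⟨h1a, h1b⟩ := Prod.mk.injEq .. ▸ h1
          obtain ⟨h2a, h2b⟩ := Prod.mk.injEq .. ▸ h2
          have e1 : x = y' := hPinj (Prod.ext
            (hrec _ _ a ha (by rw [h1a]; exact hb')) h1b)
          have e2 : y = x' := hPinj (Prod.ext
            (hrec _ _ b hb (by rw [h2a]; exact ha')) h2b)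
          rw [e1, e2, Sym2.eq_swap]
  refine ⟨fun x => (fun a => (a, (P x).2)) '' β (P x).1,
    fun x => ⟨(c (P x).1, (P x).2), Set.mem_image_of_mem _ (hc _)⟩, ?_, ?_, ?_⟩
  · -- connectivity of branch sets
    intro x a ha b hb
    obtain ⟨a0, ha0, rfl⟩ := ha
    obtain ⟨b0, hb0, rfl⟩ := hb
    refine Relation.ReflTransGen.lift (fun p => (p, (P x).2)) ?_
      _ _ (hconn (P x).1 a0 ha0 b0 hb0)
    rintro p q ⟨hp, hq, e, he⟩
    refine ⟨Set.mem_image_of_mem _ hp, Set.mem_image_of_mem _ hq, ?_⟩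
    have he' : e.1 = s(p, q) := he
    have h2 := e.2
    rw [he'] at h2
    obtain ⟨hpq, w, hw1, hw2⟩ := h2
    refine ⟨⟨s((p, (P x).2), (q, (P x).2)), ?_⟩, rfl⟩
    exact ((H.mul m).lineGraph.mem_edgeSet).2 ⟨fun h3 => hpq (congrArg Prod.fst h3), w, hw1, hw2⟩
  · -- disjointness
    intro x y hxy
    rw [Set.disjoint_left]
    rintro p ⟨a0, ha0, rfl⟩ ⟨b0, hb0, hp⟩
    have hp' : (b0, (P y).2) = (a0, (P x).2) := hp
    obtain ⟨h1, h2⟩ := Prod.mk.injEq .. ▸ hp'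
    rcases eq_or_ne (P x).1 (P y).1 with h3 | h3
    · exact hxy (hPinj (Prod.ext h3 h2.symm))
    · exact Set.disjoint_left.1 (hdisj h3) ha0 (h1 ▸ hb0)
  · -- the edge map
    refine ⟨⟨fun e => ⟨Sym2.lift ⟨gfun H m t P c A B, gsymm⟩ e.1,
      memlem e.1 e.2⟩, ?_⟩, ?_⟩
    · -- injectivity
      intro e e' hee'
      exact Subtype.ext (injlem e.1 e'.1 e.2 e'.2 (congrArg Subtype.val hee'))
    · -- edge condition
      intro e u v hev
      have hev' : e.1 = s(u, v) := hev
      have huv : u ≠ v := by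
        have h2 := e.2
        rw [hev'] at h2
        exact ((⊤ : SimpleGraph (Fin (m * t))).mem_edgeSet).1 h2
      obtain ⟨a, b, hg, ha, hb, _, _⟩ := gspec u v huv
      refine ⟨(a, (P u).2), Set.mem_image_of_mem _ ha,
        (b, (P v).2), Set.mem_image_of_mem _ hb, ?_⟩
      show Sym2.lift ⟨gfun H m t P c A B, gsymm⟩ e.1 = _
      rw [hev']
      exact (Sym2.lift_mk (f := ⟨gfun H m t P c A B, gsymm⟩) u v).trans hg
end

section
/- Let t ≥ 5 and let H be the graph on vertices {x_1, x_2, x_3} ∪ {y_1, …, y_{t−4}} where {x_1, x_2, x_3} induces a triangle and every x_i is adjacent to every y_j (and there are no edges among the y_j). Then L(H) has a K_t-immersion. -/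
/-- The join of a triangle `{x₁, x₂, x₃}` with an independent set
`{y₁, …, y_{t-4}}`. -/
def triangleJoin (t : ℕ) : SimpleGraph (Fin 3 ⊕ Fin (t - 4)) where
  Adj p q := p ≠ q ∧ (p.isLeft ∨ q.isLeft)
  symm := ⟨by rintro p q ⟨h1, h2⟩; exact ⟨Ne.symm h1, h2.symm⟩⟩
  loopless := ⟨by rintro p ⟨h, _⟩; exact h rfl⟩

namespace MGaux
open MG


variable {V A S : Type}

structure Sys (V A S : Type) where
  eps : A → Sym2 V
  u : S → V
  m : S → V
  w : S → V
  heps : ∀ a, ¬ (eps a).IsDiag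
  hum : ∀ s, u s ≠ m s
  hmw : ∀ s, m s ≠ w s
  huw : ∀ s, u s ≠ w s

abbrev TE (A S : Type) (D : Set S) : Type :=
  A ⊕ ({p : S × Bool // p.1 ∉ D} ⊕ {s : S // s ∈ D})

def Sys.tmpl (σ : Sys V A S) (D : Set S) : MG where
  V := V
  E := TE A S D
  ends := fun e => match e with
    | .inl a => σ.eps a
    | .inr (.inl p) => if p.1.2 then s(σ.m p.1.1, σ.w p.1.1) else s(σ.u p.1.1, σ.m p.1.1)
    | .inr (.inr s) => s(σ.u s.1, σ.w s.1)
  noLoop := by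
    rintro (a | p | s)
    · exact σ.heps a
    · dsimp only; split
      · simpa [Sym2.mk_isDiag_iff] using σ.hmw p.1.1
      · simpa [Sym2.mk_isDiag_iff] using σ.hum p.1.1
    · simpa [Sym2.mk_isDiag_iff] using σ.huw s.1

@[simp] lemma Sys.tmpl_V (σ : Sys V A S) (D : Set S) : (σ.tmpl D).V = V := rfl
@[simp] lemma Sys.tmpl_E (σ : Sys V A S) (D : Set S) : (σ.tmpl D).E = TE A S D := rfl
@[simp] lemma Sys.tmpl_ends_inl (σ : Sys V A S) (D : Set S) (a : A) :
    (σ.tmpl D).ends (Sum.inl a) = σ.eps a := rfl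
@[simp] lemma Sys.tmpl_ends_inrl (σ : Sys V A S) (D : Set S) (p : {p : S × Bool // p.1 ∉ D}) :
    (σ.tmpl D).ends (Sum.inr (Sum.inl p)) =
      if p.1.2 then s(σ.m p.1.1, σ.w p.1.1) else s(σ.u p.1.1, σ.m p.1.1) := rfl
@[simp] lemma Sys.tmpl_ends_inrr (σ : Sys V A S) (D : Set S) (s : {s : S // s ∈ D}) :
    (σ.tmpl D).ends (Sum.inr (Sum.inr s)) = s(σ.u s.1, σ.w s.1) := rfl

lemma Sys.step (σ : Sys V A S) (D : Set S) (s₀ : S) (hs₀ : s₀ ∉ D) :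
    MG.SplitStep (σ.tmpl D) (σ.tmpl (insert s₀ D)) := by
  classical
  have e₁ : (σ.tmpl D).E := Sum.inr (Sum.inl ⟨(s₀, false), hs₀⟩)
  have e₂ : (σ.tmpl D).E := Sum.inr (Sum.inl ⟨(s₀, true), hs₀⟩)
  refine ⟨Sum.inr (Sum.inl ⟨(s₀, false), hs₀⟩), Sum.inr (Sum.inl ⟨(s₀, true), hs₀⟩),
    σ.u s₀, σ.m s₀, σ.w s₀, σ.huw s₀, by simp, by simp, by simp, ?_⟩
  refine ⟨Equiv.refl V, ⟨?toFun, ?invFun, ?li, ?ri⟩, ?ends⟩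
  case toFun =>
    exact fun e => match e with
      | .inl a => .inl ⟨.inl a, by simp, by simp⟩
      | .inr (.inl ⟨(s, b), h⟩) =>
          .inl ⟨.inr (.inl ⟨(s, b), fun hD => h (Set.mem_insert_of_mem _ hD)⟩),
            by
              have hne : s ≠ s₀ := fun hss => h (hss ▸ Set.mem_insert s₀ D)
              constructor <;> · intro hc
                                injection hc with h2
                                injection h2 with h3
                                exact hne (congrArg (fun x => x.1.1) h3)⟩
      | .inr (.inr ⟨s, h⟩) =>
          if hD : s ∈ D then .inl ⟨.inr (.inr ⟨s, hD⟩),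
            by intro hc; injection hc with h2; injection h2,
            by intro hc; injection hc with h2; injection h2⟩
          else .inr ()
  case invFun =>
    exact fun e => match e with
      | .inl ⟨.inl a, _⟩ => .inl a
      | .inl ⟨.inr (.inl ⟨(s, b), h⟩), hne⟩ =>
          .inr (.inl ⟨(s, b), by
            rintro (rfl | hD)
            · cases b
              · exact hne.1 rfl
              · exact hne.2 rfl
            · exact h hD⟩)
      | .inl ⟨.inr (.inr ⟨s, h⟩), _⟩ => .inr (.inr ⟨s, Set.mem_insert_of_mem _ h⟩)
      | .inr _ => .inr (.inr ⟨s₀, Set.mem_insert _ _⟩)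
  case li =>
    rintro (a | ⟨⟨s, b⟩, h⟩ | ⟨s, h⟩)
    · rfl
    · rfl
    · rcases h with h | hD
      · subst h
        simp [hs₀]
      · simp [hD]
  case ri =>
    rintro (⟨(a | ⟨⟨s, b⟩, h⟩ | ⟨s, h⟩), hne1, hne2⟩ | ⟨⟩)
    · rfl
    · rfl
    · exact dif_pos h
    · exact dif_neg hs₀
  case ends =>
    rintro (a | ⟨⟨s, b⟩, h⟩ | ⟨s, h⟩)
    · exact (congrFun Sym2.map_id _).symm
    · simp only [Equiv.coe_fn_mk]
      cases b <;> exact (congrFun Sym2.map_id _).symm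
    · simp only [Equiv.coe_fn_mk]
      rcases Set.mem_insert_iff.mp h with rfl | hD
    
      · simp [hs₀, splitOff]
        exact Or.inl ⟨rfl, rfl⟩
      · simp [hD, splitOff]
        exact Or.inl ⟨rfl, rfl⟩

lemma Sys.reach [Finite S] (σ : Sys V A S) :
    Relation.ReflTransGen MG.SplitStep (σ.tmpl ∅) (σ.tmpl Set.univ) := by
  suffices H : ∀ n (D : Set S), Dᶜ.ncard = n →
      Relation.ReflTransGen MG.SplitStep (σ.tmpl D) (σ.tmpl Set.univ) from H _ _ rfl
  intro n
  induction n using Nat.strong_induction_on with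
  | _ n ih =>
    intro D hD
    rcases Set.eq_empty_or_nonempty Dᶜ with hc | ⟨s₀, hs₀⟩
    · rw [Set.compl_empty_iff.mp hc]
    · have hi : (insert s₀ D)ᶜ = Dᶜ \ {s₀} := by ext x; simp [and_comm]
      have hlt : (insert s₀ D)ᶜ.ncard < n := by
        rw [hi, ← hD]
        exact Set.ncard_diff_singleton_lt_of_mem hs₀ (Set.toFinite _)
      exact Relation.ReflTransGen.head (σ.step D s₀ hs₀) (ih _ hlt _ rfl)

end MGaux



namespace TJimm
open MG MGaux

variable (t : ℕ)

abbrev HV (t : ℕ) : Type := Fin 3 ⊕ Fin (t - 4)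
abbrev HE (t : ℕ) : Type := ((triangleJoin t).toMG).E

lemma HE.ext_iff {t : ℕ} {a b : HE t} : a = b ↔ (a.1 : Sym2 (HV t)) = b.1 :=
  Subtype.ext_iff

abbrev LG (t : ℕ) : MG := SimpleGraph.toMG ((triangleJoin t).toMG).lineGraph

lemma LGE.ext_iff {t : ℕ} {a b : (LG t).E} : a = b ↔ (a.1 : Sym2 (HE t)) = b.1 :=
  Subtype.ext_iff

def ea : HE t := ⟨s(Sum.inl 0, Sum.inl 1), by
  exact (SimpleGraph.mem_edgeSet _).mpr ⟨by simp, Or.inl rfl⟩⟩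
def eb : HE t := ⟨s(Sum.inl 0, Sum.inl 2), by
  exact (SimpleGraph.mem_edgeSet _).mpr ⟨by simp, Or.inl rfl⟩⟩
def ec : HE t := ⟨s(Sum.inl 1, Sum.inl 2), by
  exact (SimpleGraph.mem_edgeSet _).mpr ⟨by simp, Or.inl rfl⟩⟩
def epj (j : Fin (t - 4)) : HE t := ⟨s(Sum.inl 0, Sum.inr j), by
  exact (SimpleGraph.mem_edgeSet _).mpr ⟨by simp, Or.inl rfl⟩⟩
def eqj (j : Fin (t - 4)) : HE t := ⟨s(Sum.inl 1, Sum.inr j), by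
  exact (SimpleGraph.mem_edgeSet _).mpr ⟨by simp, Or.inl rfl⟩⟩
def erj (j : Fin (t - 4)) : HE t := ⟨s(Sum.inl 2, Sum.inr j), by
  exact (SimpleGraph.mem_edgeSet _).mpr ⟨by simp, Or.inl rfl⟩⟩

variable (ht : 5 ≤ t)

def tau (i : Fin t) : HE t :=
  if h : 4 ≤ i.1 then epj t ⟨i.1 - 4, by omega⟩
  else if i.1 = 0 then ea t else if i.1 = 1 then eb t
  else if i.1 = 2 then ec t else eqj t ⟨0, by omega⟩

lemma tau_eq0 {i : Fin t} (h : i.1 = 0) : tau t ht i = ea t := by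
  simp [tau, h]
lemma tau_eq1 {i : Fin t} (h : i.1 = 1) : tau t ht i = eb t := by
  simp [tau, h]
lemma tau_eq2 {i : Fin t} (h : i.1 = 2) : tau t ht i = ec t := by
  simp [tau, h]
lemma tau_eq3 {i : Fin t} (h : i.1 = 3) : tau t ht i = eqj t ⟨0, by omega⟩ := by
  simp [tau, h]
lemma tau_ge4 {i : Fin t} (h : 4 ≤ i.1) : tau t ht i = epj t ⟨i.1 - 4, by omega⟩ := by
  simp [tau, h]

lemma tau_inj : Function.Injective (tau t ht) := by
  intro i j hij
  unfold tau at hij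
  split_ifs at hij <;> simp only [HE.ext_iff] at hij <;>
    simp_all [ea, eb, ec, epj, eqj, erj, HE.ext_iff, Sym2.eq_iff, Fin.ext_iff] <;>
    omega

abbrev SIdx (t : ℕ) : Type := Fin (t - 4) ⊕ Fin (t - 4)

def sysu : SIdx t → HE t := fun s => match s with
  | .inl _ => ec t
  | .inr j => if j.1 = 0 then eb t else eqj t ⟨0, by omega⟩

def sysm : SIdx t → HE t := fun s => match s with
  | .inl j => erj t j
  | .inr j => if j.1 = 0 then erj t j else eqj t j

def sysw : SIdx t → HE t := fun s => match s with
  | .inl j => epj t j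
  | .inr j => if j.1 = 0 then eqj t j else epj t j

def Term : Set (HE t) := Set.range (tau t ht)

def AT : Type :=
  {e : ((triangleJoin t).toMG).lineGraph.edgeSet // ∀ v ∈ (e.1 : Sym2 (HE t)), v ∈ Term t ht}

def sys : Sys (HE t) (AT t ht) (SIdx t) where
  eps a := a.1.1
  u := sysu t ht
  m := sysm t
  w := sysw t
  heps a := SimpleGraph.not_isDiag_of_mem_edgeSet _ a.1.2
  hum := by
    rintro (j | j) <;> simp only [Ne, HE.ext_iff, sysu, sysm] <;> (try split_ifs) <;>
      simp [HE.ext_iff, ea, eb, ec, epj, eqj, erj, Sym2.eq_iff, Fin.ext_iff] <;>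
      omega
  hmw := by
    rintro (j | j) <;> simp only [Ne, HE.ext_iff, sysw, sysm] <;> (try split_ifs) <;>
      simp [HE.ext_iff, ea, eb, ec, epj, eqj, erj, Sym2.eq_iff]
  huw := by
    rintro (j | j) <;> simp only [Ne, HE.ext_iff, sysu, sysw] <;> (try split_ifs) <;>
      simp [HE.ext_iff, ea, eb, ec, epj, eqj, erj, Sym2.eq_iff, Fin.ext_iff] <;>
      omega

lemma tau_4j (j : Fin (t - 4)) : tau t ht ⟨4 + j.1, by omega⟩ = epj t j := by
  rw [tau_ge4 t ht (by simp)]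
  congr 1
  exact Fin.ext (by simp)

lemma u_term (s : SIdx t) : sysu t ht s ∈ Term t ht := by
  rcases s with j | j
  · exact ⟨⟨2, by omega⟩, tau_eq2 t ht rfl⟩
  · simp only [sysu]
    split_ifs with h
    · exact ⟨⟨1, by omega⟩, tau_eq1 t ht rfl⟩
    · exact ⟨⟨3, by omega⟩, tau_eq3 t ht rfl⟩

lemma w_term (s : SIdx t) : sysw t s ∈ Term t ht := by
  rcases s with j | j
  · exact ⟨⟨4 + j.1, by omega⟩, tau_4j t ht j⟩
  · simp only [sysw]
    split_ifs with h
    · refine ⟨⟨3, by omega⟩, ?_⟩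
      rw [tau_eq3 t ht rfl]
      congr 1
      exact Fin.ext (by simp [h.symm])
    · exact ⟨⟨4 + j.1, by omega⟩, tau_4j t ht j⟩

lemma m_not_term (s : SIdx t) : sysm t s ∉ Term t ht := by
  rintro ⟨i, hi⟩
  rcases s with j | j <;>
  · simp only [sysm] at hi
    simp only [HE.ext_iff] at hi
    unfold tau at hi
    split_ifs at hi <;>
      simp_all [ea, eb, ec, epj, eqj, erj, HE.ext_iff, Sym2.eq_iff, Fin.ext_iff]

lemma adj_um (s : SIdx t) :
    ((triangleJoin t).toMG).lineGraph.Adj (sysu t ht s) (sysm t s) := by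
  refine ⟨(sys t ht).hum s, ?_⟩
  rcases s with j | j
  · exact ⟨Sum.inl 2, Sym2.mem_mk_right _ _, Sym2.mem_mk_left _ _⟩
  · simp only [sysu, sysm]
    split_ifs with h
    · exact ⟨Sum.inl 2, Sym2.mem_mk_right _ _, Sym2.mem_mk_left _ _⟩
    · exact ⟨Sum.inl 1, Sym2.mem_mk_left _ _, Sym2.mem_mk_left _ _⟩

include ht in
lemma adj_mw (s : SIdx t) :
    ((triangleJoin t).toMG).lineGraph.Adj (sysm t s) (sysw t s) := by
  refine ⟨(sys t ht).hmw s, ?_⟩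
  rcases s with j | j
  · exact ⟨Sum.inr j, Sym2.mem_mk_right _ _, Sym2.mem_mk_right _ _⟩
  · simp only [sysm, sysw]
    split_ifs with h
    · exact ⟨Sum.inr j, Sym2.mem_mk_right _ _, Sym2.mem_mk_right _ _⟩
    · exact ⟨Sum.inr j, Sym2.mem_mk_right _ _, Sym2.mem_mk_right _ _⟩

def feSub : TE (AT t ht) (SIdx t) ∅ → (LG t).E := fun e => match e with
  | .inl a => a.1
  | .inr (.inl ⟨(s, true), _⟩) =>
      ⟨s(sysm t s, sysw t s), (SimpleGraph.mem_edgeSet _).mpr (adj_mw t ht s)⟩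
  | .inr (.inl ⟨(s, false), _⟩) =>
      ⟨s(sysu t ht s, sysm t s), (SimpleGraph.mem_edgeSet _).mpr (adj_um t ht s)⟩
  | .inr (.inr ⟨_, h⟩) => absurd h (Set.notMem_empty _)

lemma mem_feSub_val {a : AT t ht} {s : SIdx t} {b : Bool}
    {hs : (s, b).1 ∉ (∅ : Set (SIdx t))}
    (h : feSub t ht (Sum.inl a) = feSub t ht (Sum.inr (Sum.inl ⟨(s, b), hs⟩))) :
    sysm t s ∈ (a.1.1 : Sym2 (HE t)) := by
  cases b <;>
  · simp only [feSub] at h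
    have h2 := congrArg Subtype.val h
    rw [h2]; simp

set_option maxRecDepth 4000 in
lemma feSub_inj : Function.Injective (feSub t ht) := by
  rintro (a | ⟨⟨s, b⟩, hs⟩ | ⟨s, hs⟩) e' h
  rotate_right
  · exact absurd hs (Set.notMem_empty _)
  · -- first arg inl a
    rcases e' with a' | ⟨⟨s', b'⟩, hs'⟩ | ⟨s', hs'⟩
    · exact congrArg Sum.inl (Subtype.ext h)
    · exact absurd (a.2 _ (mem_feSub_val t ht h)) (m_not_term t ht s')
    · exact absurd hs' (Set.notMem_empty _)
  · -- first arg split edge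
    rcases e' with a' | ⟨⟨s', b'⟩, hs'⟩ | ⟨s', hs'⟩
    · exact absurd (a'.2 _ (mem_feSub_val t ht h.symm)) (m_not_term t ht s)
    · simp only [feSub] at h
      have h2 := congrArg Subtype.val h
      clear h
      suffices hss : s = s' ∧ b = b' by
        obtain ⟨rfl, rfl⟩ := hss
        rfl
      cases b <;> cases b' <;> rcases s with j | j <;> rcases s' with j' | j' <;>
        simp only [sysu, sysm, sysw] at h2 <;> (try split_ifs at h2) <;>
        simp only [Sym2.eq_iff, HE.ext_iff] at h2 <;>
        simp_all [ea, eb, ec, epj, eqj, erj, HE.ext_iff, Sym2.eq_iff, Fin.ext_iff] <;>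
        omega
    · exact absurd hs' (Set.notMem_empty _)

lemma subgraphOf : MG.IsSubgraphOf ((sys t ht).tmpl ∅) (LG t) := by
  refine ⟨Function.Embedding.refl _, ⟨feSub t ht, feSub_inj t ht⟩, ?_⟩
  rintro (a | ⟨⟨s, b⟩, hs⟩ | ⟨s, hs⟩)
  · exact (congrFun Sym2.map_id _).symm
  · cases b <;> exact (congrFun Sym2.map_id _).symm
  · exact absurd hs (Set.notMem_empty _)

noncomputable def rho (x : HE t) : Fin t :=
  haveI : Nonempty (Fin t) := ⟨⟨0, by omega⟩⟩
  Function.invFun (tau t ht) x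

lemma rho_tau (i : Fin t) : rho t ht (tau t ht i) = i :=
  haveI : Nonempty (Fin t) := ⟨⟨0, by omega⟩⟩
  Function.leftInverse_invFun (tau_inj t ht) i

lemma tau_rho {x : HE t} (hx : x ∈ Term t ht) : tau t ht (rho t ht x) = x :=
  haveI : Nonempty (Fin t) := ⟨⟨0, by omega⟩⟩
  Function.invFun_eq hx

lemma map_tau_rho (p : Sym2 (HE t)) (hp : ∀ v ∈ p, v ∈ Term t ht) :
    Sym2.map (tau t ht) (Sym2.map (rho t ht) p) = p := by
  revert hp
  induction p using Sym2.ind with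
  | _ x y =>
    intro hp
    rw [Sym2.map_pair_eq, Sym2.map_pair_eq, tau_rho t ht (hp x (by simp)),
      tau_rho t ht (hp y (by simp))]

def kidx : SIdx t → Sym2 (Fin t) := fun s => match s with
  | .inl j => s((⟨2, by omega⟩ : Fin t), ⟨4 + j.1, by omega⟩)
  | .inr j =>
      if j.1 = 0 then s((⟨1, by omega⟩ : Fin t), ⟨3, by omega⟩)
      else s((⟨3, by omega⟩ : Fin t), ⟨4 + j.1, by omega⟩)

lemma kidx_nondiag (s : SIdx t) : ¬ (kidx t ht s).IsDiag := by
  rcases s with j | j <;> simp only [kidx] <;> (try split_ifs) <;>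
    simp [Sym2.mk_isDiag_iff, Fin.ext_iff] <;> omega

lemma map_tau_kidx (s : SIdx t) :
    Sym2.map (tau t ht) (kidx t ht s) = s(sysu t ht s, sysw t s) := by
  rcases s with j | j
  · simp only [kidx, Sym2.map_pair_eq, sysu, sysw]
    rw [tau_eq2 t ht rfl, tau_4j t ht j]
  · simp only [kidx, sysu, sysw]
    split_ifs with h
    · have hj0 : j = ⟨0, by omega⟩ := Fin.ext h
      rw [Sym2.map_pair_eq, tau_eq1 t ht rfl, tau_eq3 t ht rfl, hj0]
    · rw [Sym2.map_pair_eq, tau_eq3 t ht rfl, tau_4j t ht j]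

lemma Amap_mem (a : AT t ht) :
    Sym2.map (rho t ht) a.1.1 ∈ (⊤ : SimpleGraph (Fin t)).edgeSet := by
  rw [SimpleGraph.edgeSet_top]
  obtain ⟨⟨p, hp⟩, hterm⟩ := a
  revert hp hterm
  induction p using Sym2.ind with
  | _ x y =>
    intro hp hterm
    have hx : x ∈ Term t ht := hterm x (by simp)
    have hy : y ∈ Term t ht := hterm y (by simp)
    have hne : x ≠ y := ((SimpleGraph.mem_edgeSet _).mp hp).1
    simp only [Sym2.map_pair_eq, Set.mem_compl_iff, Sym2.mem_diagSet, Sym2.mk_isDiag_iff]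
    intro h
    exact hne (by rw [← tau_rho t ht hx, ← tau_rho t ht hy, h])

noncomputable def toK : TE (AT t ht) (SIdx t) Set.univ → (completeMG t).E := fun e => match e with
  | .inl a => ⟨Sym2.map (rho t ht) a.1.1, Amap_mem t ht a⟩
  | .inr (.inl p) => absurd (Set.mem_univ p.1.1) p.2
  | .inr (.inr ⟨s, _⟩) => ⟨kidx t ht s, by
      rw [SimpleGraph.edgeSet_top]; exact kidx_nondiag t ht s⟩

lemma not_adj_uw (s : SIdx t) :
    s(sysu t ht s, sysw t s) ∉ ((triangleJoin t).toMG).lineGraph.edgeSet := by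
  rw [SimpleGraph.mem_edgeSet]
  rintro ⟨-, v, hv1, hv2⟩
  rcases s with j | j <;> simp only [sysu, sysw] at hv1 hv2 <;>
    (try split_ifs at hv1 hv2) <;>
    simp_all [SimpleGraph.toMG, ea, eb, ec, epj, eqj, erj, Sym2.mem_iff] <;>
    rcases Sym2.mem_iff.mp hv1 with rfl | rfl <;> have := Sym2.mem_iff.mp hv2 <;>
    simp_all [Fin.ext_iff]

lemma kidx_inj : Function.Injective (kidx t ht) := by
  rintro (j | j) (j' | j') h <;> simp only [kidx] at h <;> (try split_ifs at h) <;>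
    simp_all [Sym2.eq_iff, Fin.ext_iff] <;> omega

lemma toK_inj : Function.Injective (toK t ht) := by
  rintro (a | p | ⟨s, hs⟩) (a' | p' | ⟨s', hs'⟩) h
  · have h2 := congrArg Subtype.val h
    simp only [toK] at h2
    have h3 := congrArg (Sym2.map (tau t ht)) h2
    rw [map_tau_rho t ht _ a.2, map_tau_rho t ht _ a'.2] at h3
    exact congrArg Sum.inl (Subtype.ext (Subtype.ext h3))
  · exact absurd (Set.mem_univ _) p'.2
  · exfalso
    have h2 := congrArg Subtype.val h
    simp only [toK] at h2
    have h3 := congrArg (Sym2.map (tau t ht)) h2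
    rw [map_tau_rho t ht _ a.2, map_tau_kidx t ht s'] at h3
    have hm := a.1.2
    rw [h3] at hm
    exact not_adj_uw t ht s' hm
  · exact absurd (Set.mem_univ _) p.2
  · exact absurd (Set.mem_univ _) p.2
  · exact absurd (Set.mem_univ _) p.2
  · exfalso
    have h2 := congrArg Subtype.val h
    simp only [toK] at h2
    have h3 := congrArg (Sym2.map (tau t ht)) h2
    rw [map_tau_rho t ht _ a'.2, map_tau_kidx t ht s] at h3
    have hm := a'.1.2
    rw [← h3] at hm
    exact not_adj_uw t ht s hm
  · exact absurd (Set.mem_univ _) p'.2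
  · have h2 := congrArg Subtype.val h
    simp only [toK] at h2
    exact congrArg Sum.inr (congrArg Sum.inr (Subtype.ext (kidx_inj t ht h2)))

lemma tau_ne {i j : Fin t} (hij : i ≠ j) : tau t ht i ≠ tau t ht j :=
  fun h => hij (tau_inj t ht h)

def mkA (i j : Fin t) (hne : tau t ht i ≠ tau t ht j) (v : HV t)
    (hv1 : v ∈ (tau t ht i).1) (hv2 : v ∈ (tau t ht j).1) : AT t ht :=
  ⟨⟨s(tau t ht i, tau t ht j), (SimpleGraph.mem_edgeSet _).mpr ⟨hne, v, hv1, hv2⟩⟩, by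
    intro u hu
    have hu' : u ∈ s(tau t ht i, tau t ht j) := hu
    rcases Sym2.mem_iff.mp hu' with rfl | rfl
    exacts [⟨i, rfl⟩, ⟨j, rfl⟩]⟩

lemma toK_mkA (i j : Fin t) (hne : tau t ht i ≠ tau t ht j) (v : HV t)
    (hv1 : v ∈ (tau t ht i).1) (hv2 : v ∈ (tau t ht j).1) :
    (toK t ht (Sum.inl (mkA t ht i j hne v hv1 hv2))).1 = s(i, j) := by
  simp only [toK, mkA, Sym2.map_pair_eq, rho_tau]

lemma key (i j : Fin t) (hij : i.1 < j.1) : ∃ e, (toK t ht e).1 = s(i, j) := by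
  have hne : tau t ht i ≠ tau t ht j :=
    tau_ne t ht (fun h => absurd (congrArg Fin.val h) (by omega))
  by_cases hj4 : 4 ≤ j.1
  · rcases Nat.lt_or_ge i.1 4 with hi4 | hi4
    · rcases (show i.1 = 0 ∨ i.1 = 1 ∨ i.1 = 2 ∨ i.1 = 3 by omega) with hi | hi | hi | hi
      · refine ⟨Sum.inl (mkA t ht i j hne (Sum.inl 0) ?_ ?_), toK_mkA t ht i j hne _ _ _⟩
        · rw [tau_eq0 t ht hi]; simp [ea]
        · rw [tau_ge4 t ht hj4]; simp [epj]
      · refine ⟨Sum.inl (mkA t ht i j hne (Sum.inl 0) ?_ ?_), toK_mkA t ht i j hne _ _ _⟩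
        · rw [tau_eq1 t ht hi]; simp [eb]
        · rw [tau_ge4 t ht hj4]; simp [epj]
      · refine ⟨Sum.inr (Sum.inr ⟨Sum.inl ⟨j.1 - 4, by omega⟩, Set.mem_univ _⟩), ?_⟩
        show kidx t ht (Sum.inl ⟨j.1 - 4, by omega⟩) = s(i, j)
        simp only [kidx]
        rw [Sym2.eq_iff]
        left
        exact ⟨Fin.ext (show 2 = i.1 by omega), Fin.ext (show 4 + (j.1 - 4) = j.1 by omega)⟩
      · by_cases hj5 : 5 ≤ j.1
        · refine ⟨Sum.inr (Sum.inr ⟨Sum.inr ⟨j.1 - 4, by omega⟩, Set.mem_univ _⟩), ?_⟩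
          show kidx t ht (Sum.inr ⟨j.1 - 4, by omega⟩) = s(i, j)
          simp only [kidx]
          rw [if_neg (show ¬((⟨j.1 - 4, by omega⟩ : Fin (t - 4)).1 = 0) by simp; omega)]
          rw [Sym2.eq_iff]
          left
          exact ⟨Fin.ext (show 3 = i.1 by omega), Fin.ext (show 4 + (j.1 - 4) = j.1 by omega)⟩
        · refine ⟨Sum.inl (mkA t ht i j hne (Sum.inr ⟨0, by omega⟩) ?_ ?_),
            toK_mkA t ht i j hne _ _ _⟩
          · rw [tau_eq3 t ht hi]; simp [eqj]
          · rw [tau_ge4 t ht hj4]; simp [epj, Fin.ext_iff]; omega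
    · refine ⟨Sum.inl (mkA t ht i j hne (Sum.inl 0) ?_ ?_), toK_mkA t ht i j hne _ _ _⟩ <;>
        · rw [tau_ge4 t ht (by omega)]; simp [epj]
  · rcases (show (i.1 = 0 ∧ j.1 = 1) ∨ (i.1 = 0 ∧ j.1 = 2) ∨ (i.1 = 0 ∧ j.1 = 3) ∨
        (i.1 = 1 ∧ j.1 = 2) ∨ (i.1 = 1 ∧ j.1 = 3) ∨ (i.1 = 2 ∧ j.1 = 3) by omega) with
      ⟨hi, hj⟩ | ⟨hi, hj⟩ | ⟨hi, hj⟩ | ⟨hi, hj⟩ | ⟨hi, hj⟩ | ⟨hi, hj⟩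
    · refine ⟨Sum.inl (mkA t ht i j hne (Sum.inl 0) ?_ ?_), toK_mkA t ht i j hne _ _ _⟩
      · rw [tau_eq0 t ht hi]; simp [ea]
      · rw [tau_eq1 t ht hj]; simp [eb]
    · refine ⟨Sum.inl (mkA t ht i j hne (Sum.inl 1) ?_ ?_), toK_mkA t ht i j hne _ _ _⟩
      · rw [tau_eq0 t ht hi]; simp [ea]
      · rw [tau_eq2 t ht hj]; simp [ec]
    · refine ⟨Sum.inl (mkA t ht i j hne (Sum.inl 1) ?_ ?_), toK_mkA t ht i j hne _ _ _⟩
      · rw [tau_eq0 t ht hi]; simp [ea]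
      · rw [tau_eq3 t ht hj]; simp [eqj]
    · refine ⟨Sum.inl (mkA t ht i j hne (Sum.inl 2) ?_ ?_), toK_mkA t ht i j hne _ _ _⟩
      · rw [tau_eq1 t ht hi]; simp [eb]
      · rw [tau_eq2 t ht hj]; simp [ec]
    · refine ⟨Sum.inr (Sum.inr ⟨Sum.inr ⟨0, by omega⟩, Set.mem_univ _⟩), ?_⟩
      show kidx t ht (Sum.inr ⟨0, by omega⟩) = s(i, j)
      simp only [kidx, if_true]
      rw [Sym2.eq_iff]
      left
      exact ⟨Fin.ext (show 1 = i.1 by omega), Fin.ext (show 3 = j.1 by omega)⟩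
    · refine ⟨Sum.inl (mkA t ht i j hne (Sum.inl 1) ?_ ?_), toK_mkA t ht i j hne _ _ _⟩
      · rw [tau_eq2 t ht hi]; simp [ec]
      · rw [tau_eq3 t ht hj]; simp [eqj]

lemma toK_surj : Function.Surjective (toK t ht) := by
  rintro ⟨p, hp⟩
  revert hp
  induction p using Sym2.ind with
  | _ x y =>
    intro hp
    have hxy : x ≠ y := by
      rw [SimpleGraph.edgeSet_top] at hp
      simpa [Sym2.mk_isDiag_iff] using hp
    rcases Nat.lt_trichotomy x.1 y.1 with h | h | h
    · obtain ⟨e, he⟩ := key t ht x y h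
      exact ⟨e, Subtype.ext he⟩
    · exact absurd (Fin.ext h) hxy
    · obtain ⟨e, he⟩ := key t ht y x h
      exact ⟨e, Subtype.ext (he.trans Sym2.eq_swap)⟩

lemma ends_toK (x : TE (AT t ht) (SIdx t) Set.univ) :
    Sym2.map (tau t ht) (toK t ht x).1 = ((sys t ht).tmpl Set.univ).ends x := by
  rcases x with a | p | ⟨s, hs⟩
  · exact map_tau_rho t ht a.1.1 a.2
  · exact absurd (Set.mem_univ _) p.2
  · exact map_tau_kidx t ht s

lemma isolated (v : HE t) (hv : v ∉ Set.range (tau t ht)) (e : TE (AT t ht) (SIdx t) Set.univ) :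
    v ∉ ((sys t ht).tmpl Set.univ).ends e := by
  rcases e with a | p | ⟨s, hs⟩
  · exact fun hmem => hv (a.2 v hmem)
  · exact absurd (Set.mem_univ _) p.2
  · intro hmem
    rcases Sym2.mem_iff.mp hmem with rfl | rfl
    exacts [hv (u_term t ht s), hv (w_term t ht s)]

end TJimm

/-- for `t ≥ 5`, the line graph of the join of `K₃` with an
independent set of size `t - 4` has a `K_t`-immersion. -/
theorem triangleJoin_lineGraph_clique_immersion (t : ℕ) (ht : 5 ≤ t) :
    MG.Immersion (SimpleGraph.toMG ((triangleJoin t).toMG).lineGraph)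
      (completeMG t) := by
  open TJimm MGaux in
  refine ⟨(sys t ht).tmpl ∅, (sys t ht).tmpl Set.univ, subgraphOf t ht, (sys t ht).reach,
    ⟨tau t ht, tau_inj t ht⟩,
    (Equiv.ofBijective (toK t ht) ⟨toK_inj t ht, toK_surj t ht⟩).symm, ?_, ?_⟩
  · intro e
    have h2 := (Equiv.ofBijective (toK t ht)
      ⟨toK_inj t ht, toK_surj t ht⟩).apply_symm_apply e
    have h3 := ends_toK t ht ((Equiv.ofBijective (toK t ht)
      ⟨toK_inj t ht, toK_surj t ht⟩).symm e)
    exact h3.symm.trans (congrArg (fun q => Sym2.map (tau t ht) q.1) h2)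
  · intro v hv e
    exact isolated t ht v hv e
end
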